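/- Let 2 ≤ k ≤ n-1 and β > 0. For the zonal function f(η) = ηₙ^{β+(1-k)/2} (1-ηₙ)^{-β-(k-1)/2} on the upper hemisphere, and θ ∈ S^{n-1} with 0 < θₙ < 1, the equatorially tangent slice mean satisfies: with b = θₙ√(1-θₙ²) and c̃ = Γ(k/2)/(π^{1/2}Γ((k-1)/2)), c̃ (2b)^{2-k} ∫_0^{2b} s^{β+(1-k)/2} (1-s)^{-β-(k-1)/2} s^{(k-3)/2} (2b-s)^{(k-3)/2} ds = (Γ(k/2)Γ(β)/(π^{1/2}Γ(β+(k-1)/2))) · (2b)^{β+(1-k)/2} (1-2b)^{-β}, for 2b < 1. -/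

import Mathlib

open MeasureTheory Set

/-- Real Beta integral. -/
lemma realBetaAux (p q : ℝ) (hp : 0 < p) (hq : 0 < q) :
    ∫ t in (0:ℝ)..1, t ^ (p - 1) * (1 - t) ^ (q - 1) =
      Real.Gamma p * Real.Gamma q / Real.Gamma (p + q) := by
  have hcb : Complex.betaIntegral p q
      = ((∫ t in (0:ℝ)..1, t ^ (p - 1) * (1 - t) ^ (q - 1) : ℝ) : ℂ) := by
    rw [Complex.betaIntegral, ← intervalIntegral.integral_ofReal]
    apply intervalIntegral.integral_congr
    intro x hx
    rw [uIcc_of_le (by norm_num : (0:ℝ) ≤ 1)] at hx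
    dsimp only
    rw [Complex.ofReal_mul, Complex.ofReal_cpow hx.1, Complex.ofReal_cpow (by linarith [hx.2])]
    push_cast
    ring
  have h := Complex.Gamma_mul_Gamma_eq_betaIntegral
    (s := (p:ℂ)) (t := (q:ℂ)) (by simpa using hp) (by simpa using hq)
  rw [hcb, ← Complex.ofReal_add, Complex.Gamma_ofReal, Complex.Gamma_ofReal,
    Complex.Gamma_ofReal] at h
  have h' : Real.Gamma p * Real.Gamma q
      = Real.Gamma (p + q) * ∫ t in (0:ℝ)..1, t ^ (p - 1) * (1 - t) ^ (q - 1) := by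
    exact_mod_cast h
  have hG : Real.Gamma (p + q) ≠ 0 := (Real.Gamma_pos_of_pos (by linarith)).ne'
  field_simp
  linarith [h']

/-- The Abel-type integral via the Möbius substitution. -/
lemma abelAux (p q T : ℝ) (hp : 0 < p) (hq : 0 < q) (hT0 : 0 < T) (hT1 : T < 1) :
    ∫ s in (0:ℝ)..T, s ^ (p - 1) * (T - s) ^ (q - 1) * (1 - s) ^ (-(p + q)) =
      T ^ (p + q - 1) * (1 - T) ^ (-p) *
        (Real.Gamma p * Real.Gamma q / Real.Gamma (p + q)) := by
  have hD : (0:ℝ) < 1 - T := by linarith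
  set φ : ℝ → ℝ := fun t => T * t / (1 - T + T * t) with hφ
  set φ' : ℝ → ℝ := fun t => T * (1 - T) / (1 - T + T * t) ^ 2 with hφ'
  have hw : ∀ t : ℝ, 0 < t → 0 < 1 - T + T * t := by
    intro t ht; nlinarith
  have hderiv : ∀ t ∈ Ioo (0:ℝ) 1, HasDerivAt φ (φ' t) t := by
    intro t ht
    have hwt := hw t ht.1
    have h1 : HasDerivAt (fun t : ℝ => T * t) T t := by
      simpa using (hasDerivAt_id t).const_mul T
    have h2 : HasDerivAt (fun t : ℝ => 1 - T + T * t) T t := by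
      simpa using h1.const_add (1 - T)
    have := h1.div h2 hwt.ne'
    rw [show T * (1 - T + T * t) - T * t * T = T * (1 - T) by ring] at this
    exact this
  have hinj : InjOn φ (Ioo (0:ℝ) 1) := by
    intro a ha b hb h
    have hwa := hw a ha.1
    have hwb := hw b hb.1
    simp only [hφ] at h
    rw [div_eq_div_iff hwa.ne' hwb.ne'] at h
    have h2 : T * (1 - T) * a = T * (1 - T) * b := by nlinarith
    exact mul_left_cancel₀ (by positivity) h2
  have himg : φ '' Ioo (0:ℝ) 1 = Ioo 0 T := by
    ext s
    constructor
    · rintro ⟨t, ⟨ht0, ht1⟩, rfl⟩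
      have hwt := hw t ht0
      constructor
      · simp only [hφ]; positivity
      · simp only [hφ]
        rw [div_lt_iff₀ hwt]
        nlinarith [mul_pos (mul_pos hT0 hD) (sub_pos.2 ht1)]
    · rintro ⟨hs0, hsT⟩
      have h1s : (0:ℝ) < 1 - s := by linarith
      refine ⟨(1 - T) * s / (T * (1 - s)), ⟨by positivity, ?_⟩, ?_⟩
      · rw [div_lt_one (by positivity)]
        nlinarith
      · simp only [hφ]
        rw [div_eq_iff]
        · field_simp
          ring
        · have : 1 - T + T * ((1 - T) * s / (T * (1 - s))) = (1 - T) / (1 - s) := by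
            field_simp; ring
          rw [this]
          positivity
  have key : ∀ t ∈ Ioo (0:ℝ) 1,
      |φ' t| • (φ t ^ (p - 1) * (T - φ t) ^ (q - 1) * (1 - φ t) ^ (-(p + q)))
        = T ^ (p + q - 1) * (1 - T) ^ (-p) * (t ^ (p - 1) * (1 - t) ^ (q - 1)) := by
    intro t ⟨ht0, ht1⟩
    have h1t : (0:ℝ) < 1 - t := by linarith
    have hwt := hw t ht0
    have e1 : T - φ t = T * (1 - T) * (1 - t) / (1 - T + T * t) := by
      simp only [hφ]; field_simp; ring
    have e2 : 1 - φ t = (1 - T) / (1 - T + T * t) := by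
      simp only [hφ]; field_simp; ring
    have e3 : |φ' t| = T * (1 - T) / (1 - T + T * t) ^ 2 := by
      simp only [hφ']
      exact abs_of_pos (by positivity)
    rw [e1, e2, e3, smul_eq_mul, hφ]
    simp only []
    rw [Real.rpow_def_of_pos (show (0:ℝ) < T * t / (1 - T + T * t) by positivity),
      Real.rpow_def_of_pos (show (0:ℝ) < T * (1 - T) * (1 - t) / (1 - T + T * t) by positivity),
      Real.rpow_def_of_pos (show (0:ℝ) < (1 - T) / (1 - T + T * t) by positivity),
      Real.rpow_def_of_pos hT0, Real.rpow_def_of_pos hD,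
      Real.rpow_def_of_pos ht0, Real.rpow_def_of_pos h1t]
    rw [show T * (1 - T) / (1 - T + T * t) ^ 2
        = Real.exp (Real.log T + Real.log (1 - T) - 2 * Real.log (1 - T + T * t)) by
      rw [Real.exp_sub, Real.exp_add, Real.exp_log hT0, Real.exp_log hD,
        show (2:ℝ) * Real.log (1 - T + T * t) = ((2:ℕ):ℝ) * Real.log (1 - T + T * t) by norm_num,
        Real.exp_nat_mul, Real.exp_log hwt]]
    simp only [← Real.exp_add]
    congr 1
    rw [Real.log_div (by positivity) hwt.ne', Real.log_div (by positivity) hwt.ne',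
      Real.log_div hD.ne' hwt.ne', Real.log_mul hT0.ne' ht0.ne',
      Real.log_mul (by positivity) h1t.ne', Real.log_mul hT0.ne' hD.ne']
    ring
  rw [intervalIntegral.integral_of_le hT0.le, MeasureTheory.integral_Ioc_eq_integral_Ioo,
    ← himg,
    integral_image_eq_integral_abs_deriv_smul measurableSet_Ioo
      (fun t ht => (hderiv t ht).hasDerivWithinAt) hinj]
  rw [MeasureTheory.setIntegral_congr_fun measurableSet_Ioo key]
  rw [MeasureTheory.integral_const_mul, ← MeasureTheory.integral_Ioc_eq_integral_Ioo,
    ← intervalIntegral.integral_of_le (zero_le_one), realBetaAux p q hp hq]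

/-- Example 5.4 closed form: the equatorially tangent slice mean of the zonal function
`f(η) = ηₙ^{β+(1-k)/2}(1-ηₙ)^{-β-(k-1)/2}` in its one-dimensional Abel-integral form. -/
theorem equatorial_slice_example (n k : ℕ) (hk : 2 ≤ k) (hkn : k ≤ n - 1)
    (β : ℝ) (hβ : 0 < β) (θn : ℝ) (hθ0 : 0 < θn) (hθ1 : θn < 1)
    (b : ℝ) (hb : b = θn * Real.sqrt (1 - θn ^ 2)) (h2b : 2 * b < 1) :
    Real.Gamma ((k : ℝ) / 2) / (Real.sqrt Real.pi * Real.Gamma (((k : ℝ) - 1) / 2)) *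
        (2 * b) ^ (2 - (k : ℝ)) *
      ∫ s in (0:ℝ)..(2 * b),
        s ^ (β + (1 - (k : ℝ)) / 2) * (1 - s) ^ (-β - ((k : ℝ) - 1) / 2) *
          s ^ (((k : ℝ) - 3) / 2) * (2 * b - s) ^ (((k : ℝ) - 3) / 2) =
    Real.Gamma ((k : ℝ) / 2) * Real.Gamma β /
        (Real.sqrt Real.pi * Real.Gamma (β + ((k : ℝ) - 1) / 2)) *
      ((2 * b) ^ (β + (1 - (k : ℝ)) / 2) * (1 - 2 * b) ^ (-β)) := by
  have hk2 : (2:ℝ) ≤ (k:ℝ) := by exact_mod_cast hk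
  have hq : 0 < ((k:ℝ) - 1) / 2 := by linarith
  have hb0 : 0 < b := by
    rw [hb]
    have h1 : 0 < 1 - θn ^ 2 := by nlinarith
    exact mul_pos hθ0 (Real.sqrt_pos.mpr h1)
  have hT0 : (0:ℝ) < 2 * b := by linarith
  have hint : (∫ s in (0:ℝ)..(2 * b),
        s ^ (β + (1 - (k : ℝ)) / 2) * (1 - s) ^ (-β - ((k : ℝ) - 1) / 2) *
          s ^ (((k : ℝ) - 3) / 2) * (2 * b - s) ^ (((k : ℝ) - 3) / 2))
      = ∫ s in (0:ℝ)..(2 * b),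
        s ^ (β - 1) * (2 * b - s) ^ (((k:ℝ) - 1) / 2 - 1) *
          (1 - s) ^ (-(β + ((k:ℝ) - 1) / 2)) := by
    rw [intervalIntegral.integral_of_le hT0.le, intervalIntegral.integral_of_le hT0.le,
      MeasureTheory.integral_Ioc_eq_integral_Ioo, MeasureTheory.integral_Ioc_eq_integral_Ioo]
    apply MeasureTheory.setIntegral_congr_fun measurableSet_Ioo
    rintro s ⟨hs0, hsT⟩
    dsimp only
    rw [show s ^ (β + (1 - (k : ℝ)) / 2) * (1 - s) ^ (-β - ((k : ℝ) - 1) / 2) *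
          s ^ (((k : ℝ) - 3) / 2) * (2 * b - s) ^ (((k : ℝ) - 3) / 2)
        = s ^ (β + (1 - (k : ℝ)) / 2) * s ^ (((k : ℝ) - 3) / 2) *
          (2 * b - s) ^ (((k : ℝ) - 3) / 2) * (1 - s) ^ (-β - ((k : ℝ) - 1) / 2) by ring,
      ← Real.rpow_add hs0,
      show β + (1 - (k:ℝ)) / 2 + ((k:ℝ) - 3) / 2 = β - 1 by ring,
      show ((k:ℝ) - 3) / 2 = ((k:ℝ) - 1) / 2 - 1 by ring,
      show -β - ((k:ℝ) - 1) / 2 = -(β + ((k:ℝ) - 1) / 2) by ring]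
  rw [hint, abelAux β (((k:ℝ) - 1) / 2) (2 * b) hβ hq hT0 h2b]
  have hΓ1 : Real.Gamma (((k:ℝ) - 1) / 2) ≠ 0 := (Real.Gamma_pos_of_pos hq).ne'
  have hΓ2 : Real.Gamma (β + ((k:ℝ) - 1) / 2) ≠ 0 :=
    (Real.Gamma_pos_of_pos (by linarith)).ne'
  have hπ : Real.sqrt Real.pi ≠ 0 := (Real.sqrt_pos.mpr Real.pi_pos).ne'
  have hTpow : (2 * b) ^ (2 - (k:ℝ)) * (2 * b) ^ (β + ((k:ℝ) - 1) / 2 - 1)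
      = (2 * b) ^ (β + (1 - (k:ℝ)) / 2) := by
    rw [← Real.rpow_add hT0]
    congr 1
    ring
  rw [← hTpow]
  field_simp
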